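/- Let N ≥ 1 be an integer, w ≥ 0 an integer, ω a Dirichlet character modulo N, τ ∈ ℋ, and s ∈ ℂ with w + 2 Re(s) > 2. Let γ = [[a,b],[c,d]] ∈ SL₂(ℤ) with N | c. Then E_{w,N}(γτ, s, ω) = ω(d)^{−1} (cτ+d)^w (|cτ+d|²)^s E_{w,N}(τ, s, ω), where γτ = (aτ+b)/(cτ+d). -/

import Mathlib

open Complex

noncomputable section

/-- The Eisenstein series `E_{w,N}(τ,s,ω) = Σ'_{(m,n)} ω(n)/((Nmτ+n)^w |Nmτ+n|^{2s})`. -/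
def EwN (N : ℕ) (w : ℕ) (ω : DirichletCharacter ℂ N) (τ : ℂ) (s : ℂ) : ℂ :=
  ∑' p : {q : ℤ × ℤ // q ≠ 0},
    ω ((p.1.2 : ℤ) : ZMod N) /
      (((N : ℂ) * (p.1.1 : ℂ) * τ + (p.1.2 : ℂ)) ^ w *
        ((Complex.normSq ((N : ℂ) * (p.1.1 : ℂ) * τ + (p.1.2 : ℂ)) : ℂ)) ^ s)

end

/-- A linear `(u:ℂ)τ + v` with integer coefficients not both zero is nonzero on ℋ. -/
lemma lin_ne_zero (τ : UpperHalfPlane) {u v : ℤ} (h : ¬(u = 0 ∧ v = 0)) :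
    (u : ℂ) * (τ : ℂ) + (v : ℂ) ≠ 0 := by
  intro h0
  have him := congrArg Complex.im h0
  simp only [Complex.add_im, Complex.mul_im, Complex.intCast_im, Complex.intCast_re,
    Complex.zero_im, zero_mul, mul_zero, add_zero, zero_add] at him
  have hu : u = 0 := by
    rcases mul_eq_zero.mp him with h' | h'
    · exact_mod_cast h'
    · exact absurd h' (ne_of_gt τ.im_pos)
  subst hu
  have hre := congrArg Complex.re h0
  simp only [Complex.add_re, Complex.mul_re, Complex.intCast_re, Complex.intCast_im,
    Int.cast_zero, zero_mul, mul_zero, sub_zero, zero_add, zero_sub, neg_zero,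
    Complex.zero_re] at hre
  exact h ⟨rfl, by exact_mod_cast hre⟩

/-- Right multiplication by a unimodular integer matrix, as an equivalence of `ℤ × ℤ`. -/
def rowEquiv (a nb k d : ℤ) (h : a * d - nb * k = 1) : ℤ × ℤ ≃ ℤ × ℤ where
  toFun p := (p.1 * a + p.2 * k, p.1 * nb + p.2 * d)
  invFun p := (p.1 * d - p.2 * k, -(p.1 * nb) + p.2 * a)
  left_inv p := by
    obtain ⟨m, n⟩ := p
    simp only [Prod.mk.injEq]
    constructor
    · linear_combination m * h
    · linear_combination n * h
  right_inv p := by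
    obtain ⟨m, n⟩ := p
    simp only [Prod.mk.injEq]
    constructor
    · linear_combination m * h
    · linear_combination n * h

lemma cpow_div_ofReal {x y : ℝ} (hx : 0 ≤ x) (hy : 0 < y) (s : ℂ) :
    ((x / y : ℝ) : ℂ) ^ s = (x : ℂ) ^ s / (y : ℂ) ^ s := by
  have hys : ((y : ℝ) : ℂ) ^ s ≠ 0 := by
    simp [Complex.cpow_eq_zero_iff, hy.ne']
  have h := Complex.mul_cpow_ofReal_nonneg (div_nonneg hx hy.le) hy.le s
  rw [← Complex.ofReal_mul, div_mul_cancel₀ _ hy.ne'] at h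
  rw [eq_div_iff hys]
  push_cast at h ⊢
  exact h.symm

/-- for `γ = [[a,b],[c,d]] ∈ SL₂(ℤ)` with `N ∣ c`,
`E_{w,N}(γτ, s, ω) = ω(d)⁻¹ (cτ+d)^w (|cτ+d|²)^s E_{w,N}(τ, s, ω)`
where `γτ = (aτ+b)/(cτ+d)`. -/
theorem EwN_transformation
    (N : ℕ) [NeZero N] (w : ℕ) (ω : DirichletCharacter ℂ N)
    (τ : UpperHalfPlane) (s : ℂ) (hs : (w : ℝ) + 2 * s.re > 2)
    (γ : Matrix.SpecialLinearGroup (Fin 2) ℤ) (hc : (N : ℤ) ∣ γ.1 1 0) :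
    EwN N w ω
        ((((γ.1 0 0 : ℤ) : ℂ) * (τ : ℂ) + ((γ.1 0 1 : ℤ) : ℂ)) /
          (((γ.1 1 0 : ℤ) : ℂ) * (τ : ℂ) + ((γ.1 1 1 : ℤ) : ℂ))) s
      = (ω ((γ.1 1 1 : ℤ) : ZMod N))⁻¹ *
          (((γ.1 1 0 : ℤ) : ℂ) * (τ : ℂ) + ((γ.1 1 1 : ℤ) : ℂ)) ^ w *
          ((Complex.normSq (((γ.1 1 0 : ℤ) : ℂ) * (τ : ℂ) + ((γ.1 1 1 : ℤ) : ℂ)) : ℂ)) ^ s *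
          EwN N w ω (τ : ℂ) s := by
  obtain ⟨k, hk⟩ := hc
  set a : ℤ := γ.1 0 0 with ha
  set b : ℤ := γ.1 0 1 with hb
  set c : ℤ := γ.1 1 0 with hcc
  set d : ℤ := γ.1 1 1 with hd
  have hdet : a * d - b * c = 1 := by
    have h2 := γ.2
    rw [Matrix.det_fin_two] at h2
    exact h2
  have hdet' : a * d - (N * b) * k = 1 := by linear_combination hdet + b * hk
  -- d is a unit mod N
  have hda : ((d : ZMod N)) * ((a : ZMod N)) = 1 := by
    have h1 : ((a * d - b * c : ℤ) : ZMod N) = 1 := by rw [hdet]; norm_cast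
    rw [hk] at h1
    push_cast at h1
    rw [ZMod.natCast_self] at h1
    ring_nf at h1 ⊢
    linear_combination h1
  have hωd : ω ((d : ℤ) : ZMod N) ≠ 0 := by
    have hu : IsUnit ((d : ℤ) : ZMod N) := IsUnit.of_mul_eq_one _ hda
    exact (hu.map ω).ne_zero
  -- denominators
  have hcd : ¬(c = 0 ∧ d = 0) := by
    rintro ⟨h1, h2⟩
    rw [h1, h2] at hdet
    simp at hdet
  have hj : (c : ℂ) * (τ : ℂ) + (d : ℂ) ≠ 0 := lin_ne_zero τ hcd
  set j : ℂ := (c : ℂ) * (τ : ℂ) + (d : ℂ) with hjdef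
  have hjsq : 0 < Complex.normSq j := Complex.normSq_pos.mpr hj
  have hjw : j ^ w ≠ 0 := pow_ne_zero _ hj
  have hjs : ((Complex.normSq j : ℝ) : ℂ) ^ s ≠ 0 := by
    simp [Complex.cpow_eq_zero_iff, hjsq.ne']
  have hcC : (c : ℂ) = (N : ℂ) * (k : ℂ) := by exact_mod_cast congrArg (Int.cast : ℤ → ℂ) hk
  -- the reindexing equivalence
  have h00 : rowEquiv a (N * b) k d hdet' (0 : ℤ × ℤ) = 0 := by
    simp [rowEquiv]
  have hiff : ∀ q : ℤ × ℤ, q ≠ 0 ↔ rowEquiv a (N * b) k d hdet' q ≠ 0 := by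
    intro q
    constructor
    · intro hq hq'
      exact hq ((rowEquiv a (N * b) k d hdet').injective (hq'.trans h00.symm))
    · intro hq hq'
      exact hq (by rw [hq', h00])
  set e : {q : ℤ × ℤ // q ≠ 0} ≃ {q : ℤ × ℤ // q ≠ 0} :=
    (rowEquiv a (N * b) k d hdet').subtypeEquiv hiff with he
  rw [EwN, EwN]
  conv_rhs => rw [← Equiv.tsum_eq e, ← tsum_mul_left]
  refine tsum_congr fun p => ?_
  obtain ⟨⟨m, n⟩, hp⟩ := p
  have hep : ((e ⟨(m, n), hp⟩ : {q : ℤ × ℤ // q ≠ 0}) : ℤ × ℤ)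
      = (m * a + n * k, m * (N * b) + n * d) := rfl
  -- abbreviations for the new index
  set m' : ℤ := m * a + n * k with hm'
  set n' : ℤ := m * (N * b) + n * d with hn'
  have hmn' : ¬((N : ℤ) * m' = 0 ∧ n' = 0) := by
    rintro ⟨h1, h2⟩
    have hNm : m' = 0 := by
      rcases mul_eq_zero.mp h1 with h | h
      · exact absurd h (by exact_mod_cast (NeZero.ne N))
      · exact h
    exact ((hiff (m, n)).mp hp) (Prod.ext hNm h2)
  have hz' : (N : ℂ) * (m' : ℂ) * (τ : ℂ) + (n' : ℂ) ≠ 0 := by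
    have := lin_ne_zero τ (u := (N : ℤ) * m') (v := n') hmn'
    push_cast at this
    exact this
  set z' : ℂ := (N : ℂ) * (m' : ℂ) * (τ : ℂ) + (n' : ℂ) with hz'def
  have hz'sq : 0 < Complex.normSq z' := Complex.normSq_pos.mpr hz'
  have hz'w : z' ^ w ≠ 0 := pow_ne_zero _ hz'
  have hz's : ((Complex.normSq z' : ℝ) : ℂ) ^ s ≠ 0 := by
    simp [Complex.cpow_eq_zero_iff, hz'sq.ne']
  -- the key algebraic identity for the linear form
  have hzz : (N : ℂ) * (m : ℂ) * (((a : ℂ) * (τ : ℂ) + (b : ℂ)) / j) + (n : ℂ) = z' / j := by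
    have hj' : (c : ℂ) * (τ : ℂ) + (d : ℂ) ≠ 0 := hj
    rw [hz'def, hjdef]
    rw [eq_div_iff hj', add_mul, mul_assoc, div_mul_cancel₀ _ hj']
    push_cast [hm', hn']
    rw [hcC]
    ring
  -- character identity
  have hω : ω ((n' : ℤ) : ZMod N) = ω ((n : ℤ) : ZMod N) * ω ((d : ℤ) : ZMod N) := by
    have harg : ((n' : ℤ) : ZMod N) = ((n : ℤ) : ZMod N) * ((d : ℤ) : ZMod N) := by
      rw [hn']
      push_cast
      rw [ZMod.natCast_self]
      ring
    rw [harg, map_mul]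
  rw [hep]
  simp only []
  rw [hzz, div_pow, Complex.normSq_div, cpow_div_ofReal (Complex.normSq_nonneg _) hjsq, hω]
  simp only [← hz'def]
  field_simp
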